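/- For integers k ≥ 2 and n ≥ 2k, if F is a family of stable k-subsets of {1,...,n} such that every element of {1,...,n} lies in at most half the members of F, and |F| > k²·C(n-k-2, k-2), then F contains two disjoint sets. -/

import Mathlib

open Finset

attribute [local instance] Classical.propDecidable

/-- `A` is a stable subset of `{1,...,n}`: no two cyclically consecutive elements. -/
def Stable (n : ℕ) (A : Finset ℕ) : Prop :=
  (∀ i ∈ A, i + 1 ∉ A) ∧ ¬(1 ∈ A ∧ n ∈ A)

/-- The collection of stable `k`-subsets of `{1,...,n}`. -/
noncomputable def stableSets (n k : ℕ) : Finset (Finset ℕ) :=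
  ((Finset.Icc 1 n).powersetCard k).filter (fun A => Stable n A)

/-- Map an element of a stable set (other than `i < j`) on the cycle `[1,n]`
to a vertex of a path with `n-5` vertices. -/
def gmap (n i j x : ℕ) : ℕ :=
  if x < i then x + n - i - 3 else if x < j then x - i - 1 else x - i - 3

/-- Left inverse of `gmap`. -/
def hmap (n i j y : ℕ) : ℕ :=
  if y + 2 < j - i then y + i + 1 else if y + 3 ≤ n - i then y + i + 3 else y + i + 3 - n

lemma stable_facts {n : ℕ} {A : Finset ℕ} (hA : A ⊆ Icc 1 n) (hst : Stable n A) :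
    ∀ a ∈ A, ∀ b ∈ A, 1 ≤ a ∧ a ≤ n ∧ b ≠ a + 1 ∧ ¬(a = 1 ∧ b = n) := by
  intro a ha b hb
  have h1 := hA ha
  rw [mem_Icc] at h1
  refine ⟨h1.1, h1.2, ?_, ?_⟩
  · rintro rfl; exact hst.1 a ha hb
  · rintro ⟨rfl, rfl⟩; exact hst.2 ⟨ha, hb⟩

lemma gmap_mem {n i j : ℕ} {A : Finset ℕ} (hA : A ⊆ Icc 1 n) (hst : Stable n A)
    (hi : i ∈ A) (hj : j ∈ A) (hij : i < j) {x : ℕ} (hx : x ∈ A) (hxi : x ≠ i) (hxj : x ≠ j) :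
    (1 ≤ gmap n i j x ∧ gmap n i j x ≤ n - 5) ∧ hmap n i j (gmap n i j x) = x := by
  have hb := hA hx
  have hbi := hA hi
  have hbj := hA hj
  rw [mem_Icc] at hb hbi hbj
  have w2 : j ≠ i + 1 := fun h => hst.1 i hi (h ▸ hj)
  have w3 : i ≠ x + 1 := fun h => hst.1 x hx (h ▸ hi)
  have w4 : j ≠ x + 1 := fun h => hst.1 x hx (h ▸ hj)
  have w5 : x ≠ i + 1 := fun h => hst.1 i hi (h ▸ hx)
  have w6 : x ≠ j + 1 := fun h => hst.1 j hj (h ▸ hx)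
  have u3 : x = 1 → j ≠ n := by rintro rfl rfl; exact hst.2 ⟨hx, hj⟩
  have u5 : i = 1 → x ≠ n := by rintro rfl rfl; exact hst.2 ⟨hi, hx⟩
  have u7 : i = 1 → j ≠ n := by rintro rfl rfl; exact hst.2 ⟨hi, hj⟩
  clear hst hA hx hi hj
  simp only [gmap, hmap]
  split_ifs <;> omega

lemma gmap_gap {n i j : ℕ} {A : Finset ℕ} (hA : A ⊆ Icc 1 n) (hst : Stable n A)
    (hi : i ∈ A) (hj : j ∈ A) (hij : i < j) {x x' : ℕ} (hx : x ∈ A) (hxi : x ≠ i) (hxj : x ≠ j)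
    (hx' : x' ∈ A) (hxi' : x' ≠ i) (hxj' : x' ≠ j) :
    gmap n i j x' ≠ gmap n i j x + 1 := by
  have hb := hA hx
  have hb' := hA hx'
  have hbi := hA hi
  have hbj := hA hj
  rw [mem_Icc] at hb hb' hbi hbj
  have w1 : x' ≠ x + 1 := fun h => hst.1 x hx (h ▸ hx')
  have w2 : j ≠ i + 1 := fun h => hst.1 i hi (h ▸ hj)
  have w4 : j ≠ x + 1 := fun h => hst.1 x hx (h ▸ hj)
  have w6 : x ≠ j + 1 := fun h => hst.1 j hj (h ▸ hx)
  have w8 : j ≠ x' + 1 := fun h => hst.1 x' hx' (h ▸ hj)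
  have w10 : x' ≠ j + 1 := fun h => hst.1 j hj (h ▸ hx')
  have u1 : x' = 1 → x ≠ n := by rintro rfl rfl; exact hst.2 ⟨hx', hx⟩
  have u2 : x' = 1 → j ≠ n := by rintro rfl rfl; exact hst.2 ⟨hx', hj⟩
  clear hst hA hx hx' hi hj
  simp only [gmap]
  intro heq
  split_ifs at heq <;> omega

lemma line_count : ∀ N m : ℕ,
    (((Icc 1 N).powersetCard m).filter (fun T => ∀ x ∈ T, x + 1 ∉ T)).card
      ≤ Nat.choose (N + 1 - m) m := by
  intro N
  induction N using Nat.strong_induction_on with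
  | _ N ih =>
    intro m
    match m with
    | 0 =>
      calc (((Icc 1 N).powersetCard 0).filter _).card
          ≤ ((Icc 1 N).powersetCard 0).card := card_filter_le _ _
        _ = 1 := by simp [card_powersetCard]
        _ ≤ _ := by simp
    | (m' + 1) =>
      set m := m' + 1 with hm
      by_cases hNm : N < m
      · have : (((Icc 1 N).powersetCard m).filter (fun T => ∀ x ∈ T, x + 1 ∉ T)).card = 0 := by
          rw [Finset.card_eq_zero, Finset.eq_empty_iff_forall_notMem]
          intro T hT
          rw [mem_filter, mem_powersetCard] at hT
          have := card_le_card hT.1.1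
          rw [hT.1.2, Nat.card_Icc] at this
          omega
        omega
      · push_neg at hNm
        rcases Nat.lt_or_ge N 2 with hN2 | hN2
        · -- N = 1, m = 1
          have hN1 : N = 1 := by omega
          have hm1 : m = 1 := by omega
          subst hN1; rw [hm1]
          calc (((Icc 1 1).powersetCard 1).filter _).card
              ≤ ((Icc 1 1).powersetCard 1).card := card_filter_le _ _
            _ = 1 := by simp [card_powersetCard]
            _ ≤ _ := by simp
        · set S := ((Icc 1 N).powersetCard m).filter (fun T => ∀ x ∈ T, x + 1 ∉ T) with hS
          have hsplit := Finset.card_filter_add_card_filter_not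
            (s := S) (p := fun T => N ∈ T)
          have h1 : (S.filter (fun T => N ∈ T)).card
              ≤ Nat.choose (N - m) m' := by
            have hinj : (S.filter (fun T => N ∈ T)).card
                ≤ (((Icc 1 (N-2)).powersetCard m').filter (fun T => ∀ x ∈ T, x + 1 ∉ T)).card := by
              apply Finset.card_le_card_of_injOn (fun T => T.erase N)
              · intro T hT
                rw [mem_coe, mem_filter] at hT
                obtain ⟨hT1, hTN⟩ := hT
                rw [hS, mem_filter, mem_powersetCard] at hT1
                obtain ⟨⟨hsub, hcard⟩, hgap⟩ := hT1
                rw [mem_coe, mem_filter, mem_powersetCard]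
                refine ⟨⟨?_, ?_⟩, ?_⟩
                · intro x hx
                  rw [mem_erase] at hx
                  have hx2 := hsub hx.2
                  rw [mem_Icc] at hx2 ⊢
                  have hxN1 : x ≠ N - 1 := by
                    intro hxe
                    have : x + 1 ∈ T := by rw [hxe]; have : N - 1 + 1 = N := by omega
                                           rw [this]; exact hTN
                    exact hgap x hx.2 this
                  have := hx.1
                  omega
                · rw [Finset.card_erase_of_mem hTN, hcard]; omega
                · intro x hx
                  rw [mem_erase] at hx
                  intro hc
                  exact hgap x hx.2 (Finset.mem_of_mem_erase hc)
              · intro T hT T' hT' he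
                rw [mem_coe, mem_filter] at hT hT'
                simp only at he
                rw [← Finset.insert_erase hT.2, ← Finset.insert_erase hT'.2, he]
            calc (S.filter (fun T => N ∈ T)).card
                ≤ _ := hinj
              _ ≤ Nat.choose (N - 2 + 1 - m') m' := ih (N-2) (by omega) m'
              _ = Nat.choose (N - m) m' := by
                  congr 1
                  omega
          have h2 : (S.filter (fun T => ¬ N ∈ T)).card
              ≤ Nat.choose (N - m) m := by
            have hsub : S.filter (fun T => ¬ N ∈ T)
                ⊆ ((Icc 1 (N-1)).powersetCard m).filter (fun T => ∀ x ∈ T, x + 1 ∉ T) := by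
              intro T hT
              rw [mem_filter] at hT
              obtain ⟨hT1, hTN⟩ := hT
              rw [hS, mem_filter, mem_powersetCard] at hT1
              obtain ⟨⟨hsub, hcard⟩, hgap⟩ := hT1
              rw [mem_filter, mem_powersetCard]
              refine ⟨⟨?_, hcard⟩, hgap⟩
              intro x hx
              have hx2 := hsub hx
              rw [mem_Icc] at hx2 ⊢
              have : x ≠ N := fun hc => hTN (hc ▸ hx)
              omega
            calc (S.filter (fun T => ¬ N ∈ T)).card
                ≤ _ := card_le_card hsub
              _ ≤ Nat.choose (N - 1 + 1 - m) m := ih (N-1) (by omega) m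
              _ = Nat.choose (N - m) m := by congr 1; omega
          have hpascal : Nat.choose (N - m) m' + Nat.choose (N - m) m = Nat.choose (N + 1 - m) m := by
            have h1 : N + 1 - m = (N - m) + 1 := by omega
            rw [h1, hm, Nat.choose_succ_succ (N - m) m']
          omega

lemma mem_stableSets {n k : ℕ} {A : Finset ℕ} :
    A ∈ stableSets n k ↔ (A ⊆ Icc 1 n ∧ A.card = k) ∧ Stable n A := by
  rw [stableSets, mem_filter, mem_powersetCard]

lemma pair_count (n k i j : ℕ) (hk : 2 ≤ k) (hn : 2 * k ≤ n) (hij : i < j) :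
    ((stableSets n k).filter (fun A => i ∈ A ∧ j ∈ A)).card
      ≤ Nat.choose (n - k - 2) (k - 2) := by
  have hstep : ((stableSets n k).filter (fun A => i ∈ A ∧ j ∈ A)).card
      ≤ (((Icc 1 (n-5)).powersetCard (k-2)).filter (fun T => ∀ x ∈ T, x + 1 ∉ T)).card := by
    apply Finset.card_le_card_of_injOn (fun A => (A \ {i, j}).image (gmap n i j))
    · intro A hA
      rw [mem_coe, mem_filter, mem_stableSets] at hA
      obtain ⟨⟨⟨hsub, hcard⟩, hst⟩, hiA, hjA⟩ := hA
      have hdom : ∀ x ∈ A \ ({i, j} : Finset ℕ), x ∈ A ∧ x ≠ i ∧ x ≠ j := by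
        intro x hx
        rw [mem_sdiff, mem_insert, mem_singleton] at hx
        push_neg at hx
        exact ⟨hx.1, hx.2.1, hx.2.2⟩
      rw [mem_coe, mem_filter, mem_powersetCard]
      refine ⟨⟨?_, ?_⟩, ?_⟩
      · intro y hy
        rw [mem_image] at hy
        obtain ⟨x, hx, rfl⟩ := hy
        obtain ⟨hx1, hx2, hx3⟩ := hdom x hx
        have := (gmap_mem hsub hst hiA hjA hij hx1 hx2 hx3).1
        rw [mem_Icc]; exact this
      · rw [Finset.card_image_of_injOn, Finset.card_sdiff_of_subset, hcard]
        · have : ({i, j} : Finset ℕ).card = 2 := by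
            rw [Finset.card_insert_of_notMem (by simp; omega), Finset.card_singleton]
          rw [this]
        · intro x hx
          rw [mem_insert, mem_singleton] at hx
          rcases hx with rfl | rfl
          · exact hiA
          · exact hjA
        · intro x hx y hy he
          obtain ⟨hx1, hx2, hx3⟩ := hdom x hx
          obtain ⟨hy1, hy2, hy3⟩ := hdom y hy
          have h1 := (gmap_mem hsub hst hiA hjA hij hx1 hx2 hx3).2
          have h2 := (gmap_mem hsub hst hiA hjA hij hy1 hy2 hy3).2
          rw [← h1, ← h2, he]
      · intro y hy hy1
        rw [mem_image] at hy hy1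
        obtain ⟨x, hx, rfl⟩ := hy
        obtain ⟨x', hx', hx'e⟩ := hy1
        obtain ⟨hx1, hx2, hx3⟩ := hdom x hx
        obtain ⟨hz1, hz2, hz3⟩ := hdom x' hx'
        exact gmap_gap hsub hst hiA hjA hij hx1 hx2 hx3 hz1 hz2 hz3 hx'e
    · intro A hA A' hA' he
      simp only at he
      rw [mem_coe, mem_filter, mem_stableSets] at hA hA'
      obtain ⟨⟨⟨hsub, hcard⟩, hst⟩, hiA, hjA⟩ := hA
      obtain ⟨⟨⟨hsub', hcard'⟩, hst'⟩, hiA', hjA'⟩ := hA'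
      apply Finset.eq_of_subset_of_card_le _ (by rw [hcard, hcard'])
      intro x hx
      by_cases hxi : x = i
      · subst hxi; exact hiA'
      by_cases hxj : x = j
      · subst hxj; exact hjA'
      have hxd : x ∈ A \ ({i, j} : Finset ℕ) := by
        rw [mem_sdiff, mem_insert, mem_singleton]; tauto
      have : gmap n i j x ∈ (A' \ ({i, j} : Finset ℕ)).image (gmap n i j) := by
        rw [← he, mem_image]; exact ⟨x, hxd, rfl⟩
      rw [mem_image] at this
      obtain ⟨x', hx', hxe⟩ := this
      rw [mem_sdiff, mem_insert, mem_singleton] at hx'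
      push_neg at hx'
      have h1 := (gmap_mem hsub hst hiA hjA hij hx hxi hxj).2
      have h2 := (gmap_mem hsub' hst' hiA' hjA' hij hx'.1 hx'.2.1 hx'.2.2).2
      have : x = x' := by rw [← h1, ← h2, hxe]
      rw [this]; exact hx'.1
  calc ((stableSets n k).filter (fun A => i ∈ A ∧ j ∈ A)).card
      ≤ _ := hstep
    _ ≤ Nat.choose ((n - 5) + 1 - (k - 2)) (k - 2) := line_count _ _
    _ ≤ Nat.choose (n - k - 2) (k - 2) := by
        rcases Nat.lt_or_ge k 3 with h3 | h3
        · have : k = 2 := by omega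
          subst this
          simp
        · have : (n - 5) + 1 - (k - 2) = n - k - 2 := by omega
          rw [this]

theorem stmt_19 (n k : ℕ) (hk : 2 ≤ k) (hn : 2 * k ≤ n) (F : Finset (Finset ℕ))
    (hF : F ⊆ stableSets n k)
    (hpop : ∀ j ∈ Finset.Icc 1 n, 2 * (F.filter (fun A => j ∈ A)).card ≤ F.card)
    (hsize : k ^ 2 * Nat.choose (n - k - 2) (k - 2) < F.card) :
    ∃ A ∈ F, ∃ B ∈ F, A ≠ B ∧ Disjoint A B := by
  by_contra hcon
  push_neg at hcon
  have hFpos : 0 < F.card := by omega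
  obtain ⟨A₀, hA₀⟩ := Finset.card_pos.mp hFpos
  have hA₀s := mem_stableSets.mp (hF hA₀)
  -- choice of B j
  have hBex : ∀ j ∈ A₀, ∃ B, B ∈ F ∧ j ∉ B := by
    intro j hj
    by_contra hc
    push_neg at hc
    have : F.filter (fun A => j ∈ A) = F := Finset.filter_eq_self.mpr hc
    have hp := hpop j (hA₀s.1.1 hj)
    rw [this] at hp
    omega
  choose! B hBF hBj using hBex
  -- cover
  have hcov : F ⊆ A₀.biUnion (fun j => (B j).biUnion (fun i =>
      (stableSets n k).filter (fun A => min i j ∈ A ∧ max i j ∈ A))) := by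
    intro C hC
    have hCs := hF hC
    -- find j ∈ A₀ ∩ C
    have hjex : ∃ j, j ∈ A₀ ∧ j ∈ C := by
      by_cases hCA : C = A₀
      · obtain ⟨j, hj⟩ := Finset.card_pos.mp (by rw [(mem_stableSets.mp hCs).1.2]; omega : 0 < C.card)
        exact ⟨j, hCA ▸ hj, hj⟩
      · have := hcon C hC A₀ hA₀ hCA
        rw [Finset.not_disjoint_iff] at this
        obtain ⟨j, hj1, hj2⟩ := this
        exact ⟨j, hj2, hj1⟩
    obtain ⟨j, hjA₀, hjC⟩ := hjex
    have hBjF := hBF j hjA₀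
    have hBjj := hBj j hjA₀
    have hCB : C ≠ B j := fun hc => hBjj (hc ▸ hjC)
    have := hcon C hC (B j) hBjF hCB
    rw [Finset.not_disjoint_iff] at this
    obtain ⟨i, hiC, hiB⟩ := this
    rw [mem_biUnion]
    refine ⟨j, hjA₀, ?_⟩
    rw [mem_biUnion]
    refine ⟨i, hiB, ?_⟩
    rw [mem_filter]
    refine ⟨hCs, ?_, ?_⟩
    · rcases min_choice i j with h | h <;> rw [h] <;> assumption
    · rcases max_choice i j with h | h <;> rw [h] <;> assumption
  -- counting
  have hcard : F.card ≤ k * (k * Nat.choose (n - k - 2) (k - 2)) := by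
    calc F.card ≤ _ := card_le_card hcov
      _ ≤ ∑ j ∈ A₀, ((B j).biUnion (fun i =>
          (stableSets n k).filter (fun A => min i j ∈ A ∧ max i j ∈ A))).card :=
        card_biUnion_le
      _ ≤ ∑ j ∈ A₀, (k * Nat.choose (n - k - 2) (k - 2)) := by
        apply Finset.sum_le_sum
        intro j hj
        calc ((B j).biUnion _).card
            ≤ ∑ i ∈ B j, ((stableSets n k).filter
                (fun A => min i j ∈ A ∧ max i j ∈ A)).card := card_biUnion_le
          _ ≤ ∑ _i ∈ B j, Nat.choose (n - k - 2) (k - 2) := by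
              apply Finset.sum_le_sum
              intro i hi
              have hne : i ≠ j := fun hc => (hBj j hj) (hc ▸ hi)
              exact pair_count n k (min i j) (max i j) hk hn (min_lt_max.mpr hne)
          _ = k * Nat.choose (n - k - 2) (k - 2) := by
              rw [Finset.sum_const, smul_eq_mul]
              congr 1
              exact (mem_stableSets.mp (hF (hBF j hj))).1.2
      _ = k * (k * Nat.choose (n - k - 2) (k - 2)) := by
          rw [Finset.sum_const, smul_eq_mul]
          congr 1
          exact hA₀s.1.2
  have : k ^ 2 * Nat.choose (n - k - 2) (k - 2) = k * (k * Nat.choose (n - k - 2) (k - 2)) := by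
    ring
  omega
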